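/- Let (X,d) be a CAT(0) space and A ⊆ X a nonempty convex set. If there is a play of the Lion-Man game in A (for some speed D > 0) in which the man wins, then for every k > 0 there exists a k-local √2-quasi-geodesic ray whose image is contained in A. -/

import Mathlib

open Set Filter Metric

section Defs

variable {X : Type*} [MetricSpace X]

/-- A unit-speed geodesic defined on `[a, b]`. -/
def IsGeodesicOn (γ : ℝ → X) (a b : ℝ) : Prop :=
  ∀ s ∈ Set.Icc a b, ∀ t ∈ Set.Icc a b, dist (γ s) (γ t) = |s - t|

/-- `S` is a geodesic segment joining `x` and `y`. -/
def IsGeodesicSegment (S : Set X) (x y : X) : Prop :=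
  ∃ (a b : ℝ) (γ : ℝ → X), a ≤ b ∧ IsGeodesicOn γ a b ∧ γ a = x ∧ γ b = y ∧
    S = γ '' Set.Icc a b

/-- A geodesic space: every two points are joined by a geodesic segment. -/
def GeodesicSpace (X : Type*) [MetricSpace X] : Prop :=
  ∀ x y : X, ∃ S : Set X, IsGeodesicSegment S x y

/-- A uniquely geodesic space. -/
def UniquelyGeodesic (X : Type*) [MetricSpace X] : Prop :=
  ∀ x y : X, ∃! S : Set X, IsGeodesicSegment S x y

/-- `S` is contained in the closed `M`-neighborhood of `T`. -/
def InClosedNbhd (S T : Set X) (M : ℝ) : Prop :=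
  ∀ p ∈ S, ∃ q ∈ T, dist p q ≤ M

/-- A triangle with sides `S1, S2, S3` is `M`-slim. -/
def SlimTriangle (S1 S2 S3 : Set X) (M : ℝ) : Prop :=
  InClosedNbhd S1 (S2 ∪ S3) M ∧ InClosedNbhd S2 (S1 ∪ S3) M ∧ InClosedNbhd S3 (S1 ∪ S2) M

/-- `X` is `δ`-hyperbolic: every geodesic triangle is `δ`-slim. -/
def DeltaHyperbolic (X : Type*) [MetricSpace X] (δ : ℝ) : Prop :=
  ∀ x y z : X, ∀ S1 S2 S3 : Set X,
    IsGeodesicSegment S1 x y → IsGeodesicSegment S2 y z → IsGeodesicSegment S3 z x →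
    SlimTriangle S1 S2 S3 δ

/-- A geodesic ray `γ : [0, ∞) → X`. -/
def IsGeodesicRay (γ : ℝ → X) : Prop :=
  ∀ s ∈ Set.Ici (0:ℝ), ∀ t ∈ Set.Ici (0:ℝ), dist (γ s) (γ t) = |s - t|

/-- A set is geodesically bounded if it contains no geodesic ray. -/
def GeodesicallyBounded (A : Set X) : Prop :=
  ¬ ∃ γ : ℝ → X, IsGeodesicRay γ ∧ ∀ t ∈ Set.Ici (0:ℝ), γ t ∈ A

/-- A directional curve `γ : [0, ∞) → X` (with some constant `b ≥ 0`). -/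
def IsDirectionalCurve (γ : ℝ → X) : Prop :=
  ∃ b : ℝ, 0 ≤ b ∧ ∀ s ∈ Set.Ici (0:ℝ), ∀ t ∈ Set.Ici (0:ℝ),
    |s - t| - b ≤ dist (γ s) (γ t) ∧ dist (γ s) (γ t) ≤ |s - t|

/-- A set is directionally bounded if it contains no directional curve. -/
def DirectionallyBounded (A : Set X) : Prop :=
  ¬ ∃ γ : ℝ → X, IsDirectionalCurve γ ∧ ∀ t ∈ Set.Ici (0:ℝ), γ t ∈ A

/-- A subset of a geodesic space is convex if every geodesic segment joining two of its
points is contained in it. -/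
def GeodesicConvex (A : Set X) : Prop :=
  ∀ x ∈ A, ∀ y ∈ A, ∀ S : Set X, IsGeodesicSegment S x y → S ⊆ A

/-- The comparison point in the Euclidean plane: the point on the segment from `x'` to `y'`
(of length `L`) at distance `t` from `x'`. -/
noncomputable def cmpPt (x' y' : EuclideanSpace ℝ (Fin 2)) (L t : ℝ) :
    EuclideanSpace ℝ (Fin 2) :=
  AffineMap.lineMap x' y' (t / L)

/-- `X` is a CAT(0) space: it is geodesic and for every geodesic triangle and every
comparison triangle in the Euclidean plane, distances between points on the triangle are
bounded by the distances between the corresponding comparison points. -/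
def CAT0Space (X : Type*) [MetricSpace X] : Prop :=
  GeodesicSpace X ∧
  ∀ (x y z : X) (γ1 γ2 γ3 : ℝ → X),
    IsGeodesicOn γ1 0 (dist x y) → γ1 0 = x → γ1 (dist x y) = y →
    IsGeodesicOn γ2 0 (dist y z) → γ2 0 = y → γ2 (dist y z) = z →
    IsGeodesicOn γ3 0 (dist z x) → γ3 0 = z → γ3 (dist z x) = x →
    ∀ x' y' z' : EuclideanSpace ℝ (Fin 2),
      dist x' y' = dist x y → dist y' z' = dist y z → dist z' x' = dist z x →
      (∀ s ∈ Set.Icc (0:ℝ) (dist x y), ∀ t ∈ Set.Icc (0:ℝ) (dist y z),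
        dist (γ1 s) (γ2 t) ≤ dist (cmpPt x' y' (dist x y) s) (cmpPt y' z' (dist y z) t)) ∧
      (∀ s ∈ Set.Icc (0:ℝ) (dist y z), ∀ t ∈ Set.Icc (0:ℝ) (dist z x),
        dist (γ2 s) (γ3 t) ≤ dist (cmpPt y' z' (dist y z) s) (cmpPt z' x' (dist z x) t)) ∧
      (∀ s ∈ Set.Icc (0:ℝ) (dist z x), ∀ t ∈ Set.Icc (0:ℝ) (dist x y),
        dist (γ3 s) (γ1 t) ≤ dist (cmpPt z' x' (dist z x) s) (cmpPt x' y' (dist x y) t))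

/-- Busemann convexity. -/
def BusemannConvex (X : Type*) [MetricSpace X] : Prop :=
  GeodesicSpace X ∧
  ∀ (a b c d : ℝ) (γ σ : ℝ → X), a ≤ b → c ≤ d →
    IsGeodesicOn γ a b → IsGeodesicOn σ c d →
    ∀ t ∈ Set.Icc (0:ℝ) 1,
      dist (γ ((1-t)*a + t*b)) (σ ((1-t)*c + t*d)) ≤
        (1-t) * dist (γ a) (σ c) + t * dist (γ b) (σ d)

/-- A `(lam, eps)`-quasi-geodesic defined on `[a, b]`. -/
def IsQuasiGeodesicOn (lam eps : ℝ) (γ : ℝ → X) (a b : ℝ) : Prop :=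
  ∀ s ∈ Set.Icc a b, ∀ t ∈ Set.Icc a b,
    (1/lam) * |s - t| - eps ≤ dist (γ s) (γ t) ∧ dist (γ s) (γ t) ≤ lam * |s - t| + eps

/-- A `(lam, eps)`-quasi-geodesic ray. -/
def IsQuasiGeodesicRay (lam eps : ℝ) (γ : ℝ → X) : Prop :=
  ∀ s ∈ Set.Ici (0:ℝ), ∀ t ∈ Set.Ici (0:ℝ),
    (1/lam) * |s - t| - eps ≤ dist (γ s) (γ t) ∧ dist (γ s) (γ t) ≤ lam * |s - t| + eps

/-- A `k`-local `lam`-quasi-geodesic ray: a `(lam, eps)`-quasi-geodesic ray locally,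
for every `eps > 0`. -/
def IsLocalQuasiGeodesicRay (k lam : ℝ) (γ : ℝ → X) : Prop :=
  ∀ eps > (0:ℝ), ∀ s ∈ Set.Ici (0:ℝ), ∀ t ∈ Set.Ici (0:ℝ), |s - t| ≤ k →
    (1/lam) * |s - t| - eps ≤ dist (γ s) (γ t) ∧ dist (γ s) (γ t) ≤ lam * |s - t| + eps

/-- `S` is the image of a `lam`-quasi-geodesic joining `x` and `y`
(i.e. a `(lam, eps)`-quasi-geodesic for every `eps > 0`). -/
def IsQuasiGeodesicSegment (lam : ℝ) (S : Set X) (x y : X) : Prop :=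
  ∃ (a b : ℝ) (γ : ℝ → X), a ≤ b ∧ (∀ eps > (0:ℝ), IsQuasiGeodesicOn lam eps γ a b) ∧
    γ a = x ∧ γ b = y ∧ S = γ '' Set.Icc a b

/-- Every `lam`-quasi-geodesic triangle in `X` is `M`-slim. -/
def QuasiGeodesicTrianglesSlim (X : Type*) [MetricSpace X] (lam M : ℝ) : Prop :=
  ∀ x y z : X, ∀ S1 S2 S3 : Set X,
    IsQuasiGeodesicSegment lam S1 x y → IsQuasiGeodesicSegment lam S2 y z →
    IsQuasiGeodesicSegment lam S3 z x → SlimTriangle S1 S2 S3 M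

/-- A play of the Lion-Man game in `A` with speed `D`. -/
def IsLionManPlay (A : Set X) (D : ℝ) (L M : ℕ → X) : Prop :=
  (∀ n, L n ∈ A) ∧ (∀ n, M n ∈ A) ∧
  (∀ n, ∃ S : Set X, IsGeodesicSegment S (L n) (M n) ∧ L (n+1) ∈ S) ∧
  (∀ n, dist (L n) (L (n+1)) = min D (dist (L n) (M n))) ∧
  (∀ n, dist (M n) (M (n+1)) ≤ D)

/-- The lion wins a play if `d(L_{n+1}, M_n) → 0`. -/
def LionWins (L M : ℕ → X) : Prop :=
  Filter.Tendsto (fun n => dist (L (n+1)) (M n)) Filter.atTop (nhds 0)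

/-- The lion always wins the Lion-Man game played in `A`. -/
def LionAlwaysWins (A : Set X) : Prop :=
  ∀ D > (0:ℝ), ∀ L M : ℕ → X, IsLionManPlay A D L M → LionWins L M

end Defs
section Aux
open Set

variable {X : Type*} [MetricSpace X]

lemma seg_param {S : Set X} {x y : X} (h : IsGeodesicSegment S x y) :
    ∃ g : ℝ → X, IsGeodesicOn g 0 (dist x y) ∧ g 0 = x ∧ g (dist x y) = y ∧
      (∀ w ∈ Set.Icc (0:ℝ) (dist x y), g w ∈ S) ∧
      (∀ p ∈ S, ∃ w ∈ Set.Icc (0:ℝ) (dist x y), g w = p) := by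
  obtain ⟨a, b, g0, hab, hgeo, hga, hgb, hS⟩ := h
  have hd : dist x y = b - a := by
    have h1 := hgeo a ⟨le_rfl, hab⟩ b ⟨hab, le_rfl⟩
    rw [hga, hgb] at h1
    rw [h1, abs_of_nonpos (by linarith)]
    ring
  refine ⟨fun w => g0 (a + w), ?_, by simpa using hga, ?_, ?_, ?_⟩
  · intro s hs t ht
    rw [hd] at hs ht
    have := hgeo (a + s) ⟨by linarith [hs.1], by linarith [hs.2]⟩
      (a + t) ⟨by linarith [ht.1], by linarith [ht.2]⟩
    rw [this]
    congr 1
    ring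
  · show g0 (a + (dist x y)) = y
    rw [hd]
    have : a + (b - a) = b := by ring
    rw [this, hgb]
  · intro w hw
    rw [hd] at hw
    rw [hS]
    exact ⟨a + w, ⟨by linarith [hw.1], by linarith [hw.2]⟩, rfl⟩
  · intro p hp
    rw [hS] at hp
    obtain ⟨u, hu, hup⟩ := hp
    refine ⟨u - a, ⟨by linarith [hu.1], by rw [hd]; linarith [hu.2]⟩, ?_⟩
    show g0 (a + (u - a)) = p
    have : a + (u - a) = u := by ring
    rw [this, hup]

lemma geo_of_space (h : GeodesicSpace X) (x y : X) :
    ∃ g : ℝ → X, IsGeodesicOn g 0 (dist x y) ∧ g 0 = x ∧ g (dist x y) = y := by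
  obtain ⟨S, hS⟩ := h x y
  obtain ⟨g, h1, h2, h3, _, _⟩ := seg_param hS
  exact ⟨g, h1, h2, h3⟩

noncomputable def pt (a b : ℝ) : EuclideanSpace ℝ (Fin 2) := (WithLp.equiv 2 _).symm ![a, b]

lemma dist_pt (a b a' b' : ℝ) : dist (pt a b) (pt a' b') = Real.sqrt ((a-a')^2 + (b-b')^2) := by
  rw [EuclideanSpace.dist_eq]
  simp [pt, Fin.sum_univ_two, Real.dist_eq, sq_abs]

lemma lineMap_pt (c t : ℝ) (hc : c ≠ 0) : AffineMap.lineMap (pt 0 0) (pt c 0) (t/c) = pt t 0 := by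
  ext i
  fin_cases i <;>
    simp [pt, AffineMap.lineMap_apply, div_mul_cancel₀, hc]

lemma cmpPt_zero (x' y' : EuclideanSpace ℝ (Fin 2)) (L : ℝ) : cmpPt x' y' L 0 = x' := by
  simp [cmpPt, zero_div]

/-- The main comparison lemma: distance from an apex to a point on a geodesic is bounded
by the Euclidean comparison distance. -/
lemma GEN (hX : CAT0Space X) {x y apex : X} {c : ℝ} (hc : dist x y = c) (hcpos : 0 < c)
    {σ : ℝ → X} (hσ : IsGeodesicOn σ 0 c) (hσ0 : σ 0 = x) (hσc : σ c = y) :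
    ∀ t ∈ Set.Icc (0:ℝ) c, dist apex (σ t) ≤
      Real.sqrt (dist apex x ^ 2 -
        2 * t * ((dist apex x ^ 2 + c ^ 2 - dist apex y ^ 2) / (2 * c)) + t ^ 2) := by
  intro t ht
  set p := dist apex x with hp
  set q := dist apex y with hq
  have hp0 : 0 ≤ p := dist_nonneg
  have hq0 : 0 ≤ q := dist_nonneg
  have e1 : dist x apex = p := dist_comm x apex
  have e2 : dist y x = dist x y := dist_comm y x
  have tri1 : c ≤ p + q := by
    have := dist_triangle x apex y; rw [hc] at this; linarith
  have tri2 : p ≤ c + q := by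
    have := dist_triangle apex y x; rw [← hq] at this
    have h2 : dist y x = c := by rw [e2, hc]
    linarith [this, h2, dist_comm apex x]
  have tri3 : q ≤ p + c := by
    have := dist_triangle apex x y; rw [← hp, hc] at this; linarith
  set xc := (p^2 + c^2 - q^2) / (2*c) with hxc
  have hc' : (c:ℝ) ≠ 0 := ne_of_gt hcpos
  have hyc2 : 0 ≤ p^2 - xc^2 := by
    have key : p^2 - xc^2 = (4*c^2*p^2 - (p^2+c^2-q^2)^2) / (4*c^2) := by
      rw [hxc]; field_simp; ring
    have hfac : 4*c^2*p^2 - (p^2+c^2-q^2)^2 = (q-p+c)*(q+p-c)*((p+c-q)*(p+c+q)) := by ring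
    rw [key, hfac]
    apply div_nonneg _ (by positivity)
    apply mul_nonneg (mul_nonneg (by linarith) (by linarith)) (mul_nonneg (by linarith) (by linarith))
  set yc := Real.sqrt (p^2 - xc^2) with hyc
  have hyc0 : 0 ≤ yc := Real.sqrt_nonneg _
  have hycsq : yc^2 = p^2 - xc^2 := Real.sq_sqrt hyc2
  -- comparison points
  have hd1 : dist (pt xc yc) (pt 0 0) = p := by
    rw [dist_pt]
    have : (xc - 0)^2 + (yc - 0)^2 = p^2 := by rw [sub_zero, sub_zero, hycsq]; ring
    rw [this, Real.sqrt_sq hp0]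
  have hd2 : dist (pt 0 0) (pt c 0) = c := by
    rw [dist_pt]
    have : ((0:ℝ) - c)^2 + ((0:ℝ) - 0)^2 = c^2 := by ring
    rw [this, Real.sqrt_sq (le_of_lt hcpos)]
  have hd3 : dist (pt c 0) (pt xc yc) = q := by
    rw [dist_pt]
    have h2xc : 2*c*xc = p^2 + c^2 - q^2 := by rw [hxc]; field_simp
    have : (c - xc)^2 + ((0:ℝ) - yc)^2 = q^2 := by
      have : (c - xc)^2 + ((0:ℝ) - yc)^2 = c^2 - 2*c*xc + xc^2 + yc^2 := by ring
      rw [this, hycsq, h2xc]; ring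
    rw [this, Real.sqrt_sq hq0]
  -- geodesics for the other two sides
  obtain ⟨γ1, hγ1, hγ10, hγ1e⟩ := geo_of_space hX.1 apex x
  obtain ⟨γ3, hγ3, hγ30, hγ3e⟩ := geo_of_space hX.1 y apex
  have hσ' : IsGeodesicOn σ 0 (dist x y) := by rw [hc]; exact hσ
  have hcomp := (hX.2 apex x y γ1 σ γ3 hγ1 hγ10 hγ1e hσ' hσ0
    (by rw [hc]; exact hσc) hγ3 hγ30 hγ3e (pt xc yc) (pt 0 0) (pt c 0) hd1
    (by rw [hd2, hc]) (by rw [hd3, dist_comm y apex, hq])).1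
  have hms : dist apex (σ t) ≤ dist (cmpPt (pt xc yc) (pt 0 0) (dist apex x) 0)
      (cmpPt (pt 0 0) (pt c 0) (dist x y) t) := by
    have h0mem : (0:ℝ) ∈ Set.Icc (0:ℝ) (dist apex x) := ⟨le_rfl, dist_nonneg⟩
    have htmem : t ∈ Set.Icc (0:ℝ) (dist x y) := by rw [hc]; exact ht
    have := hcomp 0 h0mem t htmem
    rwa [hγ10] at this
  rw [cmpPt_zero] at hms
  have hcmp2 : cmpPt (pt 0 0) (pt c 0) (dist x y) t = pt t 0 := by
    rw [hc]; exact lineMap_pt c t hc'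
  rw [hcmp2, dist_pt] at hms
  have : (xc - t)^2 + (yc - 0)^2 = p^2 - 2*t*xc + t^2 := by
    rw [sub_zero, hycsq]; ring
  rw [this] at hms
  exact hms

/-- Convexity corollary of `GEN`. -/
lemma GEN_convex (hX : CAT0Space X) {x y apex : X} {c : ℝ} (hc : dist x y = c) (hcpos : 0 < c)
    {σ : ℝ → X} (hσ : IsGeodesicOn σ 0 c) (hσ0 : σ 0 = x) (hσc : σ c = y) :
    ∀ t ∈ Set.Icc (0:ℝ) c, dist apex (σ t) ≤
      (1 - t/c) * dist apex x + (t/c) * dist apex y := by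
  intro t ht
  have h := GEN (apex := apex) hX hc hcpos hσ hσ0 hσc t ht
  set ρ := dist apex x with hρ
  set τ := dist apex y with hτ
  have hρ0 : 0 ≤ ρ := dist_nonneg
  have hτ0 : 0 ≤ τ := dist_nonneg
  have hl0 : 0 ≤ t/c := div_nonneg ht.1 (le_of_lt hcpos)
  have hl1 : t/c ≤ 1 := by rw [div_le_one hcpos]; exact ht.2
  have hB0 : 0 ≤ (1 - t/c) * ρ + (t/c) * τ := by
    apply add_nonneg (mul_nonneg (by linarith) hρ0) (mul_nonneg hl0 hτ0)
  have tri1 : τ ≤ ρ + c := by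
    have := dist_triangle apex x y; rw [← hρ, hc] at this; linarith
  have tri2 : ρ ≤ τ + c := by
    have := dist_triangle apex y x
    have e2 : dist y x = c := by rw [dist_comm y x, hc]
    rw [← hτ, e2] at this; linarith
  have hc' : (c:ℝ) ≠ 0 := ne_of_gt hcpos
  have key : ((1 - t/c) * ρ + (t/c) * τ)^2 -
      (ρ^2 - 2*t*((ρ^2 + c^2 - τ^2)/(2*c)) + t^2) =
      (t/c) * (1 - t/c) * ((c - (ρ - τ)) * (c + (ρ - τ))) := by
    field_simp
    ring
  have hle : ρ^2 - 2*t*((ρ^2 + c^2 - τ^2)/(2*c)) + t^2 ≤ ((1 - t/c) * ρ + (t/c) * τ)^2 := by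
    nlinarith [mul_nonneg (mul_nonneg hl0 (by linarith : (0:ℝ) ≤ 1 - t/c))
      (mul_nonneg (by linarith : (0:ℝ) ≤ c - (ρ - τ)) (by linarith : (0:ℝ) ≤ c + (ρ - τ)))]
  calc dist apex (σ t) ≤ Real.sqrt (ρ^2 - 2*t*((ρ^2 + c^2 - τ^2)/(2*c)) + t^2) := h
    _ ≤ Real.sqrt (((1 - t/c) * ρ + (t/c) * τ)^2) := Real.sqrt_le_sqrt hle
    _ = (1 - t/c) * ρ + (t/c) * τ := Real.sqrt_sq hB0


lemma csqrt_le {a e w c : ℝ} (ha : 0 < a) (hc : 0 < c) (hw : 0 ≤ w)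
    (he : e ≤ w^2/(a*c^2)) : c * Real.sqrt (a*e) ≤ w := by
  have h1 : a*e ≤ (w/c)^2 := by
    have := mul_le_mul_of_nonneg_left he (le_of_lt ha)
    rw [div_pow]
    calc a * e ≤ a * (w^2/(a*c^2)) := this
    _ = w^2/c^2 := by field_simp
  have h2 : Real.sqrt (a*e) ≤ w/c := by
    have h3 := Real.sqrt_le_sqrt h1
    rwa [Real.sqrt_sq (by positivity)] at h3
  calc c * Real.sqrt (a*e) ≤ c * (w/c) := mul_le_mul_of_nonneg_left h2 (le_of_lt hc)
  _ = w := by field_simp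


lemma zlem {p q c dd delta : ℝ} (hq0 : 0 ≤ q) (hqD : q ≤ dd) (hc : 0 < c)
    (htri : c ≤ p + q) (hδ0 : 0 ≤ delta) (hcp : c - p = dd - delta) (hδD : delta ≤ dd)
    (hδp : delta ≤ p) :
    0 ≤ p - (p^2 + c^2 - q^2)/(2*c) ∧ p - (p^2 + c^2 - q^2)/(2*c) ≤ delta := by
  have hc' : (c:ℝ) ≠ 0 := ne_of_gt hc
  have hpz : p - (p^2 + c^2 - q^2)/(2*c) = (q^2 - (c-p)^2)/(2*c) := by
    field_simp
    ring
  constructor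
  · rw [hpz]
    apply div_nonneg _ (by linarith)
    nlinarith
  · rw [hpz, div_le_iff₀ (by linarith : (0:ℝ) < 2*c)]
    nlinarith


lemma sqdiff {bb z e B : ℝ} (h1 : 0 ≤ bb - z) (h2 : bb - z ≤ e) (h3 : bb ≤ B)
    (h4 : 0 ≤ bb) : bb^2 - z^2 ≤ 2*B*e := by nlinarith

lemma corner_nonneg {p v w rr : ℝ} (hrp : rr ≤ p) (hv0 : 0 ≤ v) (hv : v ≤ 2*rr/5)
    (hr : 0 < rr) (hw : 0 < w) (hw1 : w ≤ 1) : 0 ≤ p - v*w := by nlinarith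

lemma corner_sq {p v z e rr w : ℝ} (hrp : rr ≤ p) (hz : p - e ≤ z) (he : e ≤ rr/8)
    (hv0 : 0 ≤ v) (hv : v ≤ 2*rr/5) (hr : 0 < rr) (hw : 0 < w) (hwle : w ≤ 3/4)
    (hwsq : w^2 = 1/2) : p^2 - 2*v*z + v^2 ≤ (p - v*w)^2 := by
  have hp0 : 0 ≤ p := by linarith
  have hpw : p*w ≤ p*(3/4) := mul_le_mul_of_nonneg_left hwle hp0
  have hin : 0 ≤ 2*z - 2*(p*w) - v/2 := by nlinarith
  have := mul_nonneg hv0 hin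
  nlinarith [this]


lemma indstep {z c p E Y l XX K : ℝ} (hkey : (p - E - Y)*c ≤ z*(XX - l)) (hXl : 0 ≤ XX - l)
    (hzp : z ≤ p) (hp0 : 0 < p) (hEY : 0 ≤ E + Y) (hcK : c ≤ K*p) (hc0 : 0 < c) :
    l + c - K*(E+Y) ≤ XX := by
  have h1 : z*(XX-l) ≤ p*(XX-l) := mul_le_mul_of_nonneg_right hzp hXl
  have h2 : (E+Y)*c ≤ (E+Y)*(K*p) := mul_le_mul_of_nonneg_left hcK hEY
  have h4 : p * (c - K*(E+Y) - (XX - l)) ≤ 0 := by nlinarith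
  nlinarith [h4, hp0]

end Aux

open Set Filter Metric

set_option maxHeartbeats 1000000 in
/-- If there is a play of the Lion-Man game in a nonempty convex subset `A` of a CAT(0)
space in which the man wins, then for every `k > 0` there exists a `k`-local
`√2`-quasi-geodesic ray contained in `A`. -/
theorem stmt13 {X : Type*} [MetricSpace X] (hX : CAT0Space X)
    (A : Set X) (hA : A.Nonempty) (hconv : GeodesicConvex A)
    (h : ∃ D > (0:ℝ), ∃ L M : ℕ → X, IsLionManPlay A D L M ∧ ¬ LionWins L M) :
    ∀ k > (0:ℝ), ∃ γ : ℝ → X, IsLocalQuasiGeodesicRay k (Real.sqrt 2) γ ∧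
      ∀ t ∈ Set.Ici (0:ℝ), γ t ∈ A := by
  intro k hk
  obtain ⟨D, hD, L, Mn, hplay, hnw⟩ := h
  obtain ⟨hLA, hMA, hseg, hstep, hman⟩ := hplay
  choose S hSseg hLmem using hseg
  have hσex : ∀ n, ∃ g : ℝ → X, IsGeodesicOn g 0 (dist (L n) (Mn n)) ∧ g 0 = L n ∧
      g (dist (L n) (Mn n)) = Mn n ∧ (∀ w ∈ Set.Icc (0:ℝ) (dist (L n) (Mn n)), g w ∈ S n) ∧
      (∀ p ∈ S n, ∃ w ∈ Set.Icc (0:ℝ) (dist (L n) (Mn n)), g w = p) :=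
    fun n => seg_param (hSseg n)
  choose σ hgeo hσ0 hσe hσin hσsur using hσex
  obtain ⟨Dn, hDnm⟩ : ∃ Dn : ℕ → ℝ, ∀ n, Dn n = dist (L n) (Mn n) := ⟨_, fun _ => rfl⟩
  obtain ⟨b, hbm⟩ : ∃ b : ℕ → ℝ, ∀ n, b n = dist (L (n+1)) (Mn n) := ⟨_, fun _ => rfl⟩
  have hDn0 : ∀ n, 0 ≤ Dn n := fun n => (hDnm n) ▸ dist_nonneg
  have hb0 : ∀ n, 0 ≤ b n := fun n => (hbm n) ▸ dist_nonneg
  -- L (n+1) lies on the segment at parameter min D (Dn n)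
  have hL1 : ∀ n, L (n+1) = σ n (min D (Dn n)) := by
    intro n
    obtain ⟨w, hw, hwe⟩ := hσsur n _ (hLmem n)
    have hdw : dist (L n) (L (n+1)) = w := by
      rw [← hσ0 n, ← hwe]
      rw [hgeo n 0 ⟨le_rfl, dist_nonneg⟩ w (by rw [← hDnm n] at hw ⊢; exact hw)]
      rw [abs_of_nonpos (by linarith [hw.1])]; ring
    have : w = min D (Dn n) := by rw [← hdw, hstep n, hDnm n]
    rw [← hwe, this]
  have hσd : ∀ n, ∀ u ∈ Set.Icc (0:ℝ) (Dn n), ∀ v ∈ Set.Icc (0:ℝ) (Dn n),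
      dist (σ n u) (σ n v) = |u - v| := by
    intro n u hu v hv
    rw [hDnm n] at hu hv
    exact hgeo n u hu v hv
  have hminIcc : ∀ n, min D (Dn n) ∈ Set.Icc (0:ℝ) (Dn n) :=
    fun n => ⟨le_min (le_of_lt hD) (hDn0 n), min_le_right _ _⟩
  have hbe : ∀ n, b n = Dn n - min D (Dn n) := by
    intro n
    rw [hbm n, hL1 n, ← (hDnm n ▸ hσe n : σ n (Dn n) = Mn n)]
    rw [hσd n _ (hminIcc n) _ ⟨hDn0 n, le_rfl⟩]
    rw [abs_of_nonpos (by linarith [min_le_right D (Dn n)])]; ring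
  have hbmono : ∀ n, b (n+1) ≤ b n := by
    intro n
    have h1 : Dn (n+1) ≤ b n + D := by
      rw [hDnm, hbm]
      calc dist (L (n+1)) (Mn (n+1)) ≤ dist (L (n+1)) (Mn n) + dist (Mn n) (Mn (n+1)) :=
        dist_triangle _ _ _
      _ ≤ dist (L (n+1)) (Mn n) + D := by linarith [hman n]
    rcases le_total D (Dn (n+1)) with hc | hc
    · rw [hbe (n+1), min_eq_left hc]; linarith
    · rw [hbe (n+1), min_eq_right hc]; linarith [hb0 n]
  have hbanti : Antitone b := antitone_nat_of_succ_le hbmono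
  have hbdd : BddBelow (Set.range b) := ⟨0, fun x ⟨n, hn⟩ => hn ▸ hb0 n⟩
  set r := ⨅ n, b n with hrdef
  have htend : Tendsto b atTop (nhds r) := tendsto_atTop_ciInf hbanti hbdd
  have hrb : ∀ n, r ≤ b n := fun n => ciInf_le hbdd n
  have hr0 : 0 < r := by
    rcases eq_or_lt_of_le (le_ciInf hb0) with he | h
    · exfalso
      apply hnw
      have : LionWins L Mn := by
        unfold LionWins
        have hbfun : b = fun n => dist (L (n+1)) (Mn n) := funext hbm
        rw [← hbfun]
        have : (0:ℝ) = r := by rw [hrdef]; exact he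
        rw [this]
        exact htend
      exact this
    · exact h
  have hDnD : ∀ n, Dn n = D + b n := by
    intro n
    rcases le_total D (Dn n) with hc | hc
    · rw [hbe n, min_eq_left hc] at *; linarith [hbe n, min_eq_left hc]
    · exfalso
      have : b n = 0 := by rw [hbe n, min_eq_right hc]; ring
      linarith [hrb n]
  have hL1D : ∀ n, L (n+1) = σ n D := by
    intro n
    rw [hL1 n, min_eq_left (by linarith [hDnD n, hb0 n])]
  have hLL : ∀ n, dist (L n) (L (n+1)) = D := by
    intro n
    rw [hstep n, ← hDnm n, min_eq_left (by linarith [hDnD n, hb0 n])]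
  have hLLm : ∀ n j, dist (L n) (L (n + j)) ≤ (j:ℝ) * D := by
    intro n j
    induction j with
    | zero => simp
    | succ i ih =>
      calc dist (L n) (L (n+i+1)) ≤ dist (L n) (L (n+i)) + dist (L (n+i)) (L (n+i+1)) :=
        dist_triangle _ _ _
      _ ≤ (i:ℝ)*D + D := by linarith [hLL (n+i)]
      _ = ((i+1:ℕ):ℝ)*D := by push_cast; ring
  -- constants
  set m0 : ℕ := ⌈k / D⌉₊ + 1 with hm0def
  set K : ℝ := (D + b 0)/r with hKdef
  have hK1 : 1 ≤ K := by
    rw [hKdef, le_div_iff₀ hr0]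
    linarith [hrb 0]
  have hK0 : 0 < K := lt_of_lt_of_le one_pos hK1
  set v0 : ℝ := min (2*r/5) D with hv0def
  have hv0 : 0 < v0 := lt_min (by linarith) hD
  have hv0r : v0 ≤ 2*r/5 := min_le_left _ _
  have hv0D : v0 ≤ D := min_le_right _ _
  set s2 : ℝ := Real.sqrt 2 with hs2def
  have hs2sq : s2^2 = 2 := Real.sq_sqrt (by norm_num)
  have hs2nn : 0 ≤ s2 := Real.sqrt_nonneg 2
  have hs2gt1 : 1 < s2 := by nlinarith
  have hs2le : s2 ≤ 1.5 := by nlinarith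
  have hs2ge : 4/3 ≤ s2 := by nlinarith
  have hw0 : 0 < s2⁻¹ := inv_pos.2 (by linarith)
  have hw1 : s2⁻¹ ≤ 1 := by
    rw [inv_le_one_iff₀]; right; linarith
  have hwle : s2⁻¹ ≤ 3/4 := by
    rw [inv_le_comm₀ (by linarith) (by norm_num)]
    norm_num; linarith
  have hwsq : (s2⁻¹)^2 = 1/2 := by rw [inv_pow, hs2sq]; norm_num
  have h1w : 0 < 1 - s2⁻¹ := by
    have : s2⁻¹ < 1 := by rw [inv_lt_one_iff₀]; right; exact hs2gt1
    linarith
  set W : ℝ := min ((1 - s2⁻¹) * v0) (r/2) with hWdef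
  have hW0 : 0 < W := lt_min (mul_pos h1w hv0) (by linarith)
  have hWv : W ≤ (1 - s2⁻¹) * v0 := min_le_left _ _
  have hWr : W ≤ r/2 := min_le_right _ _
  set C : ℝ := (m0:ℝ) * K^m0 + 1 with hCdef
  have hC1 : 1 ≤ C := by
    rw [hCdef]
    have : (0:ℝ) ≤ (m0:ℝ) * K^m0 := mul_nonneg (Nat.cast_nonneg _) (le_of_lt (pow_pos hK0 _))
    linarith
  have hC0 : 0 < C := lt_of_lt_of_le one_pos hC1
  have hb00 : 0 < b 0 := lt_of_lt_of_le hr0 (hrb 0)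
  set ε0 : ℝ := min (min D (r/8)) (W^2/(2*(b 0)*C^2)) with hε0def
  have hε0 : 0 < ε0 := lt_min (lt_min hD (by linarith)) (by positivity)
  obtain ⟨N, hN⟩ : ∃ N, b N < r + ε0 := by
    have := htend.eventually_lt_const (lt_add_of_pos_right r hε0)
    exact this.exists
  set η : ℝ := b N - r with hηdef
  have hη0 : 0 ≤ η := by rw [hηdef]; linarith [hrb N]
  have hηε : η < ε0 := by rw [hηdef]; linarith
  have hηD : η ≤ D := le_trans (le_of_lt hηε) (le_trans (min_le_left _ _) (min_le_left _ _))
  have hηr8 : η ≤ r/8 := le_trans (le_of_lt hηε) (le_trans (min_le_left _ _) (min_le_right _ _))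
  set Y : ℝ := Real.sqrt (2 * b 0 * η) with hYdef
  have hY0 : 0 ≤ Y := Real.sqrt_nonneg _
  have hCY : C * Y ≤ W := by
    have he : η ≤ W^2/((2 * b 0)*C^2) := by
      exact le_trans (le_of_lt hηε) (min_le_right (min D (r/8)) (W^2/(2*(b 0)*C^2)))
    rw [hYdef]
    exact csqrt_le (by linarith) hC0 (le_of_lt hW0) he
  -- tail facts
  have hbN : ∀ m, N ≤ m → b m ≤ r + η := by
    intro m hm
    have := hbanti hm
    rw [hηdef]; linarith
  -- the comparison foot point
  obtain ⟨zf, hzfm⟩ : ∃ zf : ℕ → ℝ, ∀ m, zf m =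
      (b m^2 + Dn (m+1)^2 - dist (Mn m) (Mn (m+1))^2)/(2 * Dn (m+1)) := ⟨_, fun _ => rfl⟩
  have hDnpos : ∀ n, 0 < Dn n := fun n => by rw [hDnD n]; linarith [hb0 n]
  -- basic triangle facts at step m
  have hctri : ∀ m, Dn (m+1) ≤ b m + dist (Mn m) (Mn (m+1)) := by
    intro m
    rw [hDnm, hbm]
    exact dist_triangle _ _ _
  have hzfacts : ∀ m, N ≤ m → 0 ≤ b m - zf m ∧ b m - zf m ≤ b m - b (m+1) := by
    intro m hm
    have hqD : dist (Mn m) (Mn (m+1)) ≤ D := hman m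
    have hcD : Dn (m+1) = D + b (m+1) := hDnD (m+1)
    have hδ0 : 0 ≤ b m - b (m+1) := sub_nonneg.2 (hbmono m)
    have hbmN : b m ≤ r + η := hbN m hm
    have h := zlem (p := b m) (q := dist (Mn m) (Mn (m+1))) (c := Dn (m+1)) (dd := D)
      (delta := b m - b (m+1)) dist_nonneg hqD (hDnpos (m+1)) (hctri m) hδ0
      (by rw [hcD]; ring) (by linarith [hrb (m+1), hηD]) (by linarith [hb0 (m+1)])
    rw [hzfm m]
    exact h
  have hδη : ∀ m, N ≤ m → b m - b (m+1) ≤ η := by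
    intro m hm
    have := hbN m hm
    linarith [hrb (m+1)]
  have hzfacts' : ∀ m, N ≤ m → 0 ≤ b m - zf m ∧ b m - zf m ≤ η := by
    intro m hm
    obtain ⟨h1, h2⟩ := hzfacts m hm
    exact ⟨h1, le_trans h2 (hδη m hm)⟩
  -- the comparison distance bound from the apex Mn m
  have GENm : ∀ m, ∀ t ∈ Set.Icc (0:ℝ) (Dn (m+1)), dist (Mn m) (σ (m+1) t) ≤
      Real.sqrt (b m^2 - 2*t*(zf m) + t^2) := by
    intro m t ht
    have hc : dist (L (m+1)) (Mn (m+1)) = Dn (m+1) := (hDnm (m+1)).symm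
    have hcpos : 0 < Dn (m+1) := hDnpos (m+1)
    have hσg : IsGeodesicOn (σ (m+1)) 0 (Dn (m+1)) := by rw [hDnm]; exact hgeo (m+1)
    have hσ0' : σ (m+1) 0 = L (m+1) := hσ0 (m+1)
    have hσe' : σ (m+1) (Dn (m+1)) = Mn (m+1) := by rw [hDnm]; exact hσe (m+1)
    have h := GEN (apex := Mn m) hX hc hcpos hσg hσ0' hσe' t ht
    have e1 : dist (Mn m) (L (m+1)) = b m := by rw [hbm m, dist_comm]
    rw [e1] at h
    have e2 : (b m ^ 2 + Dn (m+1) ^ 2 - dist (Mn m) (Mn (m+1)) ^ 2) / (2 * Dn (m+1)) = zf m :=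
      (hzfm m).symm
    rw [e2] at h
    exact h
  -- convexity bound for arbitrary apex P
  have PCONV : ∀ m, ∀ P : X, ∀ t ∈ Set.Icc (0:ℝ) (Dn (m+1)), dist P (σ (m+1) t) ≤
      (1 - t/(Dn (m+1))) * dist P (L (m+1)) + (t/(Dn (m+1))) * dist P (Mn (m+1)) := by
    intro m P t ht
    have hc : dist (L (m+1)) (Mn (m+1)) = Dn (m+1) := (hDnm (m+1)).symm
    have hcpos : 0 < Dn (m+1) := hDnpos (m+1)
    have hσg : IsGeodesicOn (σ (m+1)) 0 (Dn (m+1)) := by rw [hDnm]; exact hgeo (m+1)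
    have hσe' : σ (m+1) (Dn (m+1)) = Mn (m+1) := by rw [hDnm]; exact hσe (m+1)
    exact GEN_convex (apex := P) hX hc hcpos hσg (hσ0 (m+1)) hσe' t ht
  -- KEY1 : distance from Mn m to the foot point is at most Y
  have KEY1 : ∀ m, N ≤ m → dist (Mn m) (σ (m+1) (zf m)) ≤ Y := by
    intro m hm
    obtain ⟨hz1, hz2⟩ := hzfacts' m hm
    have hbmr : r ≤ b m := hrb m
    have hzpos : 0 < zf m := by linarith [hηr8]
    have hzb0 : b m ≤ b 0 := hbanti (Nat.zero_le m)
    have hpc : b m ≤ Dn (m+1) := by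
      have := hbN m hm
      rw [hDnD (m+1)]
      linarith [hrb (m+1), hηD]
    have h := GENm m (zf m) ⟨le_of_lt hzpos, by linarith⟩
    calc dist (Mn m) (σ (m+1) (zf m)) ≤ Real.sqrt (b m^2 - 2*(zf m)*(zf m) + (zf m)^2) := h
    _ = Real.sqrt (b m^2 - (zf m)^2) := by congr 1; ring
    _ ≤ Real.sqrt (2 * b 0 * η) := Real.sqrt_le_sqrt (sqdiff hz1 hz2 hzb0 (hb0 m))
    _ = Y := hYdef.symm
  -- CORNER : the man certifies the corner angle bound
  have CORNER : ∀ n, N ≤ n → ∀ v ∈ Set.Icc (0:ℝ) v0,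
      dist (Mn n) (σ (n+1) v) ≤ b n - v * s2⁻¹ := by
    intro n hn v hv
    obtain ⟨hz1, hz2⟩ := hzfacts' n hn
    have hbmr : r ≤ b n := hrb n
    have hvD : v ≤ Dn (n+1) := by
      rw [hDnD (n+1)]
      linarith [hv.2, hv0D, hb0 (n+1)]
    have h := GENm n v ⟨hv.1, hvD⟩
    have hrhs : 0 ≤ b n - v * s2⁻¹ :=
      corner_nonneg hbmr hv.1 (le_trans hv.2 hv0r) hr0 hw0 hw1
    calc dist (Mn n) (σ (n+1) v) ≤ Real.sqrt (b n^2 - 2*v*(zf n) + v^2) := h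
    _ ≤ Real.sqrt ((b n - v * s2⁻¹)^2) := by
        apply Real.sqrt_le_sqrt
        exact corner_sq hbmr (by linarith) hηr8 hv.1 (le_trans hv.2 hv0r) hr0 hw0 hwle hwsq
    _ = b n - v * s2⁻¹ := Real.sqrt_sq hrhs
  -- main induction: drift lower bound to the man's position
  have IND : ∀ n, N ≤ n → ∀ α ∈ Set.Icc (0:ℝ) D, ∀ j, j ≤ m0 →
      (D - α) + (j:ℝ)*D + b (n+j) - (j:ℝ)*K^j*Y ≤ dist (σ n α) (Mn (n+j)) := by
    intro n hn α hα
    have hαDn : α ≤ Dn n := le_trans hα.2 (by linarith [hDnD n, hb0 n])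
    have hDDn : D ≤ Dn n := by linarith [hDnD n, hb0 n]
    have hPL : ∀ j : ℕ, dist (σ n α) (L (n+j+1)) ≤ (D - α) + (j:ℝ)*D := by
      intro j
      have h0 : dist (σ n α) (L (n+1)) = D - α := by
        rw [hL1D n, hσd n α ⟨hα.1, hαDn⟩ D ⟨le_of_lt hD, hDDn⟩,
          abs_of_nonpos (by linarith [hα.2])]
        ring
      have heq : n+j+1 = (n+1)+j := by omega
      calc dist (σ n α) (L (n+j+1)) ≤
          dist (σ n α) (L (n+1)) + dist (L (n+1)) (L (n+j+1)) := dist_triangle _ _ _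
      _ ≤ (D - α) + (j:ℝ)*D := by
          rw [h0, heq]
          linarith [hLLm (n+1) j]
    have hbase : dist (σ n α) (Mn n) = D + b n - α := by
      have he : σ n (Dn n) = Mn n := by rw [hDnm]; exact hσe n
      rw [← he, hσd n α ⟨hα.1, hαDn⟩ (Dn n) ⟨hDn0 n, le_rfl⟩,
        abs_of_nonpos (by linarith), hDnD n]
      ring
    intro j
    induction j with
    | zero =>
      intro _
      push_cast
      simp only [Nat.add_zero]
      rw [hbase]
      ring_nf
      linarith [le_refl (0:ℝ)]
    | succ i ih =>
      intro hj
      have him0 : i ≤ m0 := by omega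
      replace ih := ih him0
      have hm : N ≤ n + i := le_trans hn (Nat.le_add_right n i)
      obtain ⟨hz1, hz2⟩ := hzfacts' (n+i) hm
      have hbmr : r ≤ b (n+i) := hrb (n+i)
      have hzpos : 0 < zf (n+i) := by linarith [hηr8]
      have hcpos : 0 < Dn (n+i+1) := hDnpos (n+i+1)
      have hpc : b (n+i) ≤ Dn (n+i+1) := by
        rw [hDnD (n+i+1)]
        linarith [hrb (n+i+1), hbN (n+i) hm, hηD]
      have hzc : zf (n+i) ≤ Dn (n+i+1) := by linarith
      have hK1' := KEY1 (n+i) hm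
      have hPC := PCONV (n+i) (σ n α) (zf (n+i)) ⟨le_of_lt hzpos, hzc⟩
      have htri : dist (σ n α) (Mn (n+i)) ≤
          dist (σ n α) (σ (n+i+1) (zf (n+i))) + Y := by
        calc dist (σ n α) (Mn (n+i)) ≤
            dist (σ n α) (σ (n+i+1) (zf (n+i))) + dist (σ (n+i+1) (zf (n+i))) (Mn (n+i)) :=
          dist_triangle _ _ _
        _ ≤ _ + Y := by rw [dist_comm] at hK1'; linarith
      -- E + Y small
      have hiK : (i:ℝ)*K^i*Y ≤ (m0:ℝ)*K^m0*Y := by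
        apply mul_le_mul_of_nonneg_right _ hY0
        apply mul_le_mul (Nat.cast_le.2 him0) (pow_le_pow_right₀ hK1 him0)
          (le_of_lt (pow_pos hK0 i)) (Nat.cast_nonneg m0)
      have hEY : (i:ℝ)*K^i*Y + Y ≤ r/2 := by
        have hCeq : (m0:ℝ)*K^m0*Y + Y = C*Y := by rw [hCdef]; ring
        linarith [hCY, hWr]
      have hEY0 : 0 ≤ (i:ℝ)*K^i*Y + Y := by positivity
      -- bound the coefficient
      have hzdiv : zf (n+i) / Dn (n+i+1) ≤ 1 := by
        rw [div_le_one hcpos]; exact hzc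
      have hzdiv0 : 0 ≤ zf (n+i) / Dn (n+i+1) := div_nonneg (le_of_lt hzpos) (le_of_lt hcpos)
      have hPC' : dist (σ n α) (σ (n+i+1) (zf (n+i))) ≤
          (1 - zf (n+i)/Dn (n+i+1)) * ((D - α) + (i:ℝ)*D) +
          (zf (n+i)/Dn (n+i+1)) * dist (σ n α) (Mn (n+i+1)) := by
        have hL' := hPL i
        calc dist (σ n α) (σ (n+i+1) (zf (n+i))) ≤
            (1 - zf (n+i)/Dn (n+i+1)) * dist (σ n α) (L (n+i+1)) +
            (zf (n+i)/Dn (n+i+1)) * dist (σ n α) (Mn (n+i+1)) := hPC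
        _ ≤ _ := by
            apply add_le_add_left
            apply mul_le_mul_of_nonneg_left hL' (by linarith)
      have h5 : ((D - α) + (i:ℝ)*D) + (b (n+i) - (i:ℝ)*K^i*Y - Y) ≤
          (1 - zf (n+i)/Dn (n+i+1)) * ((D - α) + (i:ℝ)*D) +
          (zf (n+i)/Dn (n+i+1)) * dist (σ n α) (Mn (n+i+1)) := by
        linarith [ih, htri, hPC']
      have hexp : ((1 - zf (n+i)/Dn (n+i+1)) * ((D - α) + (i:ℝ)*D) +
          (zf (n+i)/Dn (n+i+1)) * dist (σ n α) (Mn (n+i+1))) * Dn (n+i+1) =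
          ((D - α) + (i:ℝ)*D) * Dn (n+i+1) - zf (n+i) * ((D - α) + (i:ℝ)*D) +
          zf (n+i) * dist (σ n α) (Mn (n+i+1)) := by
        field_simp
      have h6 := mul_le_mul_of_nonneg_right h5 (le_of_lt hcpos)
      rw [hexp] at h6
      have hkey : (b (n+i) - (i:ℝ)*K^i*Y - Y) * Dn (n+i+1) ≤
          zf (n+i) * (dist (σ n α) (Mn (n+i+1)) - ((D - α) + (i:ℝ)*D)) := by linarith [h6]
      have hXl : 0 ≤ dist (σ n α) (Mn (n+i+1)) - ((D - α) + (i:ℝ)*D) := by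
        by_contra hcon
        push_neg at hcon
        have hneg : zf (n+i) * (dist (σ n α) (Mn (n+i+1)) - ((D - α) + (i:ℝ)*D)) < 0 :=
          mul_neg_of_pos_of_neg hzpos (by linarith)
        have hGpos : 0 < (b (n+i) - (i:ℝ)*K^i*Y - Y) * Dn (n+i+1) :=
          mul_pos (by linarith) hcpos
        linarith
      have hKr : K*r = D + b 0 := by rw [hKdef]; field_simp
      have hcK : Dn (n+i+1) ≤ K * b (n+i) := by
        have h7 : K*r ≤ K*(b (n+i)) := mul_le_mul_of_nonneg_left hbmr (le_of_lt hK0)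
        rw [hDnD (n+i+1)]
        have h8 : b (n+i+1) ≤ b 0 := hbanti (Nat.zero_le _)
        linarith
      have hfin := indstep hkey hXl (by linarith : zf (n+i) ≤ b (n+i)) (by linarith)
        hEY0 hcK hcpos
      have hKE : K*((i:ℝ)*K^i*Y + Y) ≤ ((i:ℝ)+1)*K^(i+1)*Y := by
        have h1 : K*((i:ℝ)*K^i*Y) = (i:ℝ)*K^(i+1)*Y := by ring
        have h2 : K*Y ≤ K^(i+1)*Y :=
          mul_le_mul_of_nonneg_right (le_self_pow₀ hK1 (Nat.succ_ne_zero i)) hY0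
        linarith [h1, h2]
      push_cast
      rw [hDnD (n+i+1)] at hfin
      have : n + (i+1) = n+i+1 := by omega
      rw [this]
      linarith
  -- the curve
  obtain ⟨γ, hγdef⟩ : ∃ γ : ℝ → X, ∀ t, γ t = σ (N + ⌊t/D⌋₊) (t - (⌊t/D⌋₊:ℝ)*D) :=
    ⟨_, fun _ => rfl⟩
  have hfloor : ∀ t : ℝ, 0 ≤ t → ((⌊t/D⌋₊:ℝ)*D ≤ t ∧ t - (⌊t/D⌋₊:ℝ)*D < D) := by
    intro t ht
    have h1 : (⌊t/D⌋₊:ℝ) ≤ t/D := Nat.floor_le (div_nonneg ht (le_of_lt hD))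
    have h2 : t/D < (⌊t/D⌋₊:ℝ) + 1 := Nat.lt_floor_add_one _
    rw [div_lt_iff₀ hD] at h2
    constructor
    · calc (⌊t/D⌋₊:ℝ)*D ≤ (t/D)*D := mul_le_mul_of_nonneg_right h1 (le_of_lt hD)
      _ = t := by field_simp
    · linarith
  have hDleDn : ∀ n, D ≤ Dn n := fun n => by rw [hDnD n]; linarith [hb0 n]
  have hdistL : ∀ n : ℕ, ∀ u : ℝ, 0 ≤ u → u ≤ D → dist (σ n u) (L (n+1)) = D - u := by
    intro n u h0 h1
    rw [hL1D n, hσd n u ⟨h0, le_trans h1 (hDleDn n)⟩ D ⟨le_of_lt hD, hDleDn n⟩,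
      abs_of_nonpos (by linarith)]
    ring
  have hdistL0 : ∀ n : ℕ, ∀ u : ℝ, 0 ≤ u → u ≤ D → dist (L n) (σ n u) = u := by
    intro n u h0 h1
    rw [← hσ0 n, hσd n 0 ⟨le_rfl, hDn0 n⟩ u ⟨h0, le_trans h1 (hDleDn n)⟩,
      abs_of_nonpos (by linarith)]
    ring
  have hdistM : ∀ n : ℕ, ∀ u : ℝ, 0 ≤ u → u ≤ D → dist (σ n u) (Mn n) = D + b n - u := by
    intro n u h0 h1
    have he : σ n (Dn n) = Mn n := by rw [hDnm]; exact hσe n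
    rw [← he, hσd n u ⟨h0, le_trans h1 (hDleDn n)⟩ (Dn n) ⟨hDn0 n, le_rfl⟩,
      abs_of_nonpos (by linarith [hDleDn n]), hDnD n]
    ring
  -- upper bound: the curve is 1-Lipschitz
  have UPPER : ∀ s t : ℝ, 0 ≤ s → s ≤ t → dist (γ s) (γ t) ≤ t - s := by
    intro s t hs hst
    have ht : 0 ≤ t := le_trans hs hst
    obtain ⟨hs1, hs2⟩ := hfloor s hs
    obtain ⟨ht1, ht2⟩ := hfloor t ht
    have hmono : ⌊s/D⌋₊ ≤ ⌊t/D⌋₊ := Nat.floor_mono (by gcongr)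
    rw [hγdef s, hγdef t]
    rcases eq_or_lt_of_le hmono with heq | hlt
    · rw [← heq]
      have hDn' := hDleDn (N + ⌊s/D⌋₊)
      rw [hσd (N + ⌊s/D⌋₊) _ ⟨by linarith, by linarith⟩ _
        ⟨by linarith, by rw [← heq] at ht2; linarith⟩]
      rw [abs_of_nonpos (by linarith)]
      linarith
    · have hns1 : ⌊s/D⌋₊ + 1 ≤ ⌊t/D⌋₊ := hlt
      have hidx : N + ⌊s/D⌋₊ + 1 + (⌊t/D⌋₊ - ⌊s/D⌋₊ - 1) = N + ⌊t/D⌋₊ := by omega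
      have hcast : ((⌊t/D⌋₊ - ⌊s/D⌋₊ - 1 : ℕ):ℝ) = (⌊t/D⌋₊:ℝ) - (⌊s/D⌋₊:ℝ) - 1 := by
        rw [Nat.cast_sub (by omega), Nat.cast_sub (by omega), Nat.cast_one]
      have hL2 := hLLm (N + ⌊s/D⌋₊ + 1) (⌊t/D⌋₊ - ⌊s/D⌋₊ - 1)
      rw [hidx, hcast] at hL2
      have hd1 : dist (σ (N + ⌊s/D⌋₊) (s - (⌊s/D⌋₊:ℝ)*D)) (L (N + ⌊s/D⌋₊ + 1)) =
          D - (s - (⌊s/D⌋₊:ℝ)*D) := hdistL _ _ (by linarith) (by linarith)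
      have hd2 : dist (L (N + ⌊t/D⌋₊)) (σ (N + ⌊t/D⌋₊) (t - (⌊t/D⌋₊:ℝ)*D)) =
          t - (⌊t/D⌋₊:ℝ)*D := hdistL0 _ _ (by linarith) (by linarith)
      calc dist (σ (N + ⌊s/D⌋₊) (s - (⌊s/D⌋₊:ℝ)*D)) (σ (N + ⌊t/D⌋₊) (t - (⌊t/D⌋₊:ℝ)*D)) ≤
          dist (σ (N + ⌊s/D⌋₊) (s - (⌊s/D⌋₊:ℝ)*D)) (L (N + ⌊s/D⌋₊ + 1)) +
          dist (L (N + ⌊s/D⌋₊ + 1)) (L (N + ⌊t/D⌋₊)) +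
          dist (L (N + ⌊t/D⌋₊)) (σ (N + ⌊t/D⌋₊) (t - (⌊t/D⌋₊:ℝ)*D)) :=
        dist_triangle4 _ _ _ _
      _ ≤ (D - (s - (⌊s/D⌋₊:ℝ)*D)) + ((⌊t/D⌋₊:ℝ) - (⌊s/D⌋₊:ℝ) - 1)*D +
          (t - (⌊t/D⌋₊:ℝ)*D) := by rw [hd1, hd2]; linarith
      _ = t - s + ((⌊t/D⌋₊:ℝ) - (⌊s/D⌋₊:ℝ))*D - ((⌊t/D⌋₊:ℝ)*D - (⌊s/D⌋₊:ℝ)*D) := by ring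
      _ = t - s := by ring
  -- lower bound
  have LOWER : ∀ s t : ℝ, 0 ≤ s → s ≤ t → t - s ≤ k →
      s2⁻¹ * (t - s) ≤ dist (γ s) (γ t) := by
    intro s t hs hst hk'
    have ht : 0 ≤ t := le_trans hs hst
    obtain ⟨hs1, hs2⟩ := hfloor s hs
    obtain ⟨ht1, ht2⟩ := hfloor t ht
    have hmono : ⌊s/D⌋₊ ≤ ⌊t/D⌋₊ := Nat.floor_mono (by gcongr)
    have hN1 : N ≤ N + ⌊s/D⌋₊ := Nat.le_add_right _ _
    rw [hγdef s, hγdef t]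
    rcases Nat.lt_or_ge ⌊t/D⌋₊ (⌊s/D⌋₊ + 1) with hcase | hcase
    · -- same segment : exact equality
      have heq : ⌊s/D⌋₊ = ⌊t/D⌋₊ := by omega
      rw [heq]
      have hDn' := hDleDn (N + ⌊t/D⌋₊)
      rw [heq] at hs1 hs2
      rw [hσd (N + ⌊t/D⌋₊) _ ⟨by linarith, by linarith⟩ _ ⟨by linarith, by linarith⟩]
      rw [abs_of_nonpos (by linarith)]
      have hmul := mul_le_mul_of_nonneg_right hw1 (by linarith : (0:ℝ) ≤ t - s)
      rw [one_mul] at hmul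
      linarith
    · rcases Nat.lt_or_ge ⌊t/D⌋₊ (⌊s/D⌋₊ + 2) with hcase2 | hcase2
      · -- adjacent segments
        have heq : ⌊t/D⌋₊ = ⌊s/D⌋₊ + 1 := by omega
        have hts : t - s = (D - (s - (⌊s/D⌋₊:ℝ)*D)) + (t - (⌊t/D⌋₊:ℝ)*D) := by
          rw [heq]; push_cast; ring
        rcases le_total (t - (⌊t/D⌋₊:ℝ)*D) v0 with hβ | hβ
        · -- corner estimate
          have hd1 : dist (σ (N + ⌊s/D⌋₊) (s - (⌊s/D⌋₊:ℝ)*D)) (Mn (N + ⌊s/D⌋₊)) =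
              D + b (N + ⌊s/D⌋₊) - (s - (⌊s/D⌋₊:ℝ)*D) :=
            hdistM _ _ (by linarith) (by linarith)
          have hd2 : dist (Mn (N + ⌊s/D⌋₊)) (σ (N + ⌊s/D⌋₊ + 1) (t - (⌊t/D⌋₊:ℝ)*D)) ≤
              b (N + ⌊s/D⌋₊) - (t - (⌊t/D⌋₊:ℝ)*D) * s2⁻¹ :=
            CORNER (N + ⌊s/D⌋₊) hN1 _ ⟨by linarith, hβ⟩
          have htri := dist_triangle (σ (N + ⌊s/D⌋₊) (s - (⌊s/D⌋₊:ℝ)*D))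
            (σ (N + ⌊s/D⌋₊ + 1) (t - (⌊t/D⌋₊:ℝ)*D)) (Mn (N + ⌊s/D⌋₊))
          rw [dist_comm (σ (N + ⌊s/D⌋₊ + 1) (t - (⌊t/D⌋₊:ℝ)*D)) (Mn (N + ⌊s/D⌋₊))] at htri
          have hidx : N + ⌊t/D⌋₊ = N + ⌊s/D⌋₊ + 1 := by omega
          rw [hidx]
          have hcomb : (D - (s - (⌊s/D⌋₊:ℝ)*D)) + (t - (⌊t/D⌋₊:ℝ)*D) * s2⁻¹ ≤
              dist (σ (N + ⌊s/D⌋₊) (s - (⌊s/D⌋₊:ℝ)*D))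
                (σ (N + ⌊s/D⌋₊ + 1) (t - (⌊t/D⌋₊:ℝ)*D)) := by
            linarith [htri, hd1, hd2]
          have hfin : s2⁻¹ * (t - s) ≤ (D - (s - (⌊s/D⌋₊:ℝ)*D)) +
              (t - (⌊t/D⌋₊:ℝ)*D) * s2⁻¹ := by
            rw [hts]
            have h1 : 0 ≤ D - (s - (⌊s/D⌋₊:ℝ)*D) := by linarith
            have hmul := mul_nonneg (le_of_lt h1w) h1
            linarith
          linarith
        · -- far case with j = 1
          have hv0ts : v0 ≤ t - s := by rw [hts]; linarith
          have hj : (1:ℕ) ≤ m0 := by rw [hm0def]; omega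
          have hIND := IND (N + ⌊s/D⌋₊) hN1 (s - (⌊s/D⌋₊:ℝ)*D)
            ⟨by linarith, by linarith⟩ 1 hj
          have hidx : N + ⌊s/D⌋₊ + 1 = N + ⌊t/D⌋₊ := by omega
          rw [hidx] at hIND
          have hd2 : dist (σ (N + ⌊t/D⌋₊) (t - (⌊t/D⌋₊:ℝ)*D)) (Mn (N + ⌊t/D⌋₊)) =
              D + b (N + ⌊t/D⌋₊) - (t - (⌊t/D⌋₊:ℝ)*D) :=
            hdistM _ _ (by linarith) (by linarith)
          have htri := dist_triangle (σ (N + ⌊s/D⌋₊) (s - (⌊s/D⌋₊:ℝ)*D))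
            (σ (N + ⌊t/D⌋₊) (t - (⌊t/D⌋₊:ℝ)*D)) (Mn (N + ⌊t/D⌋₊))
          have hE : (1:ℝ)*K^1*Y ≤ (1 - s2⁻¹) * (t - s) := by
            have h1 : (1:ℝ)*K^1*Y ≤ (m0:ℝ)*K^m0*Y := by
              apply mul_le_mul_of_nonneg_right _ hY0
              apply mul_le_mul (by exact_mod_cast hj) (pow_le_pow_right₀ hK1 hj)
                (le_of_lt (pow_pos hK0 1)) (Nat.cast_nonneg m0)
            have hCeq : (m0:ℝ)*K^m0*Y + Y = C*Y := by rw [hCdef]; ring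
            have h2 : (1 - s2⁻¹) * v0 ≤ (1 - s2⁻¹) * (t - s) :=
              mul_le_mul_of_nonneg_left hv0ts (by linarith)
            linarith [hCY, hWv]
          have hts1 : t - s = 1*D + (t - (⌊t/D⌋₊:ℝ)*D) - (s - (⌊s/D⌋₊:ℝ)*D) := by
            have : (⌊t/D⌋₊:ℝ) = (⌊s/D⌋₊:ℝ) + 1 := by exact_mod_cast congrArg Nat.cast (by omega : ⌊t/D⌋₊ = ⌊s/D⌋₊ + 1)
            rw [this]; push_cast; ring
          push_cast at hIND
          linarith [hIND, htri, hd2, hE, hts1]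
      · -- at least one full segment in between
        have hj2 : 2 ≤ ⌊t/D⌋₊ - ⌊s/D⌋₊ := by omega
        have hcastj : ((⌊t/D⌋₊ - ⌊s/D⌋₊ : ℕ):ℝ) = (⌊t/D⌋₊:ℝ) - (⌊s/D⌋₊:ℝ) :=
          Nat.cast_sub hmono
        have hjD : ((⌊t/D⌋₊ - ⌊s/D⌋₊ : ℕ):ℝ)*D ≤ (t - s) + D := by
          rw [hcastj]
          linarith [ht1, hs2]
        have hjm0 : ⌊t/D⌋₊ - ⌊s/D⌋₊ ≤ m0 := by
          have h1 : ((⌊t/D⌋₊ - ⌊s/D⌋₊ : ℕ):ℝ) ≤ k/D + 1 := by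
            have h2 : ((⌊t/D⌋₊ - ⌊s/D⌋₊ : ℕ):ℝ) ≤ (k + D)/D := by
              rw [le_div_iff₀ hD]
              linarith [hjD, hk']
            have h3 : (k + D)/D = k/D + 1 := by field_simp
            linarith [h2, h3.le]
          have h2 : k/D ≤ (⌈k/D⌉₊:ℝ) := Nat.le_ceil _
          have h3 : ((⌊t/D⌋₊ - ⌊s/D⌋₊ : ℕ):ℝ) ≤ ((m0:ℕ):ℝ) := by
            rw [hm0def]; push_cast; linarith
          exact_mod_cast h3
        have hv0ts : v0 ≤ t - s := by
          have h1 : (2:ℝ) ≤ ((⌊t/D⌋₊ - ⌊s/D⌋₊ : ℕ):ℝ) := by exact_mod_cast hj2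
          rw [hcastj] at h1
          have h2 := mul_le_mul_of_nonneg_right
            (by linarith : (1:ℝ) ≤ (⌊t/D⌋₊:ℝ) - (⌊s/D⌋₊:ℝ) - 1) (le_of_lt hD)
          linarith [ht1, hs2, hv0D, h2]
        have hIND := IND (N + ⌊s/D⌋₊) hN1 (s - (⌊s/D⌋₊:ℝ)*D)
          ⟨by linarith, by linarith⟩ _ hjm0
        have hidx : N + ⌊s/D⌋₊ + (⌊t/D⌋₊ - ⌊s/D⌋₊) = N + ⌊t/D⌋₊ := by omega
        rw [hidx, hcastj] at hIND
        have hd2 : dist (σ (N + ⌊t/D⌋₊) (t - (⌊t/D⌋₊:ℝ)*D)) (Mn (N + ⌊t/D⌋₊)) =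
            D + b (N + ⌊t/D⌋₊) - (t - (⌊t/D⌋₊:ℝ)*D) :=
          hdistM _ _ (by linarith) (by linarith)
        have htri := dist_triangle (σ (N + ⌊s/D⌋₊) (s - (⌊s/D⌋₊:ℝ)*D))
          (σ (N + ⌊t/D⌋₊) (t - (⌊t/D⌋₊:ℝ)*D)) (Mn (N + ⌊t/D⌋₊))
        have hE : ((⌊t/D⌋₊:ℝ) - (⌊s/D⌋₊:ℝ))*K^(⌊t/D⌋₊ - ⌊s/D⌋₊)*Y ≤
            (1 - s2⁻¹) * (t - s) := by
          have h1 : ((⌊t/D⌋₊:ℝ) - (⌊s/D⌋₊:ℝ))*K^(⌊t/D⌋₊ - ⌊s/D⌋₊)*Y ≤ (m0:ℝ)*K^m0*Y := by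
            rw [← hcastj]
            apply mul_le_mul_of_nonneg_right _ hY0
            apply mul_le_mul (by exact_mod_cast hjm0) (pow_le_pow_right₀ hK1 hjm0)
              (le_of_lt (pow_pos hK0 _)) (Nat.cast_nonneg m0)
          have hCeq : (m0:ℝ)*K^m0*Y + Y = C*Y := by rw [hCdef]; ring
          have h2 : (1 - s2⁻¹)*v0 ≤ (1 - s2⁻¹)*(t-s) :=
            mul_le_mul_of_nonneg_left hv0ts (by linarith)
          linarith [hCY, hWv]
        have hts2 : ((⌊t/D⌋₊:ℝ) - (⌊s/D⌋₊:ℝ))*D + (t - (⌊t/D⌋₊:ℝ)*D) -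
            (s - (⌊s/D⌋₊:ℝ)*D) = t - s := by ring
        linarith [hIND, htri, hd2, hE, hts2]
  -- assembly
  refine ⟨γ, ?_, ?_⟩
  · intro eps heps s hs t ht hst
    rw [Set.mem_Ici] at hs ht
    rcases le_total s t with hc | hc
    · have habs : |s - t| = t - s := by rw [abs_sub_comm]; exact abs_of_nonneg (by linarith)
      rw [habs] at hst ⊢
      constructor
      · have hl := LOWER s t hs hc hst
        rw [one_div]
        linarith
      · have hu := UPPER s t hs hc
        have h2 := mul_nonneg (by linarith : (0:ℝ) ≤ s2 - 1) (by linarith : (0:ℝ) ≤ t - s)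
        linarith
    · have habs : |s - t| = s - t := abs_of_nonneg (by linarith)
      rw [habs] at hst ⊢
      rw [dist_comm]
      constructor
      · have hl := LOWER t s ht hc hst
        rw [one_div]
        linarith
      · have hu := UPPER t s ht hc
        have h2 := mul_nonneg (by linarith : (0:ℝ) ≤ s2 - 1) (by linarith : (0:ℝ) ≤ s - t)
        linarith
  · intro t ht
    rw [Set.mem_Ici] at ht
    rw [hγdef t]
    obtain ⟨h1, h2⟩ := hfloor t ht
    have hmem : σ (N + ⌊t/D⌋₊) (t - (⌊t/D⌋₊:ℝ)*D) ∈ S (N + ⌊t/D⌋₊) := by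
      apply hσin
      refine ⟨by linarith, ?_⟩
      rw [← hDnm]
      linarith [hDleDn (N + ⌊t/D⌋₊)]
    exact hconv (L (N + ⌊t/D⌋₊)) (hLA _) (Mn (N + ⌊t/D⌋₊)) (hMA _) (S (N + ⌊t/D⌋₊))
      (hSseg _) hmem
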